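/- arXiv:1901.02936 — 3 statements merged into one kernel-verified Lean document; each statement's English description precedes it below -/
import Mathlib

section
/- Let m ≥ 2, let S be a nonempty proper subset of {1,…,m}, and let σ_e² > 0 be fixed. Suppose Γ assigns to every positive definite m×m real matrix Σ a symmetric m×m real matrix Γ(Σ) such that: (i) Γ(Σ) is positive semidefinite and Σ − Γ(Σ) is positive semidefinite; (ii) for every u ∈ ℝᵐ, uᵀΓ(Σ)u = uᵀΣu if and only if u_{Sᶜ} = 0; and (iii) whenever two positive definite matrices Σ and Σ′ agree on all entries (i,j) except possibly those with both i ∈ Sᶜ and j ∈ Sᶜ, one has Γ(Σ) = Γ(Σ′). Then for every positive definite Σ, Γ(Σ) is the block matrix with blocks Γ(Σ)_{S,S} = Σ_{S,S}, Γ(Σ)_{S,Sᶜ} = Σ_{S,Sᶜ}, Γ(Σ)_{Sᶜ,S} = Σ_{Sᶜ,S}, and Γ(Σ)_{Sᶜ,Sᶜ} = Σ_{Sᶜ,S} Σ_{S,S}⁻¹ Σ_{S,Sᶜ}. Equivalently, for every u ∈ ℝᵐ, uᵀΓ(Σ)u = uᵀΣu − u_{Sᶜ}ᵀ Σ_{Sᶜ|S}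 u_{Sᶜ}. -/
open Matrix

/-- The submatrix of `A` with rows indexed by `S` and columns indexed by `T`. -/
def blk {m : ℕ} (A : Matrix (Fin m) (Fin m) ℝ) (S T : Finset (Fin m)) :
    Matrix ↥S ↥T ℝ :=
  Matrix.of fun i j => A i.val j.val

/-- The subvector of `u` with coordinates indexed by `S`. -/
def subvec {m : ℕ} (u : Fin m → ℝ) (S : Finset (Fin m)) : ↥S → ℝ :=
  fun i => u i.val

/-- The Schur complement `Σ_{Sᶜ|S} = Σ_{Sᶜ,Sᶜ} − Σ_{Sᶜ,S} Σ_{S,S}⁻¹ Σ_{S,Sᶜ}`. -/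
noncomputable def schurCompl {m : ℕ} (A : Matrix (Fin m) (Fin m) ℝ) (S : Finset (Fin m)) :
    Matrix ↥Sᶜ ↥Sᶜ ℝ :=
  blk A Sᶜ Sᶜ - blk A Sᶜ S * (blk A S S)⁻¹ * blk A S Sᶜ

section helpers
variable {m : ℕ} (S : Finset (Fin m))

/-- The canonical equivalence `↥S ⊕ ↥Sᶜ ≃ Fin m`. -/
def eS : (↥S ⊕ ↥Sᶜ) ≃ Fin m :=
  ((Equiv.refl ↥S).sumCongr (Equiv.subtypeEquivRight
    (fun x => (Finset.mem_compl (a := x))))).trans (Equiv.sumCompl (· ∈ S))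

@[simp] lemma eS_inl (a : ↥S) : eS S (Sum.inl a) = a.val := rfl
@[simp] lemma eS_inr (b : ↥Sᶜ) : eS S (Sum.inr b) = b.val := rfl

lemma submatrix_eS (M : Matrix (Fin m) (Fin m) ℝ) :
    M.submatrix (eS S) (eS S) =
      fromBlocks (blk M S S) (blk M S Sᶜ) (blk M Sᶜ S) (blk M Sᶜ Sᶜ) := by
  ext i j
  cases i <;> cases j <;> rfl

lemma comp_eS (u : Fin m → ℝ) : u ∘ (eS S) = Sum.elim (subvec u S) (subvec u Sᶜ) := by
  funext i; cases i <;> rfl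

lemma dot_equiv {α β : Type*} [Fintype α] [Fintype β] (e : α ≃ β) (v w : β → ℝ) :
    (v ∘ e) ⬝ᵥ (w ∘ e) = v ⬝ᵥ w :=
  Equiv.sum_comp e fun j => v j * w j

lemma quad_equiv {α : Type*} [Fintype α] (M : Matrix (Fin m) (Fin m) ℝ) (e : α ≃ Fin m)
    (u : Fin m → ℝ) : (u ∘ e) ⬝ᵥ (M.submatrix e e) *ᵥ (u ∘ e) = u ⬝ᵥ M *ᵥ u := by
  rw [submatrix_mulVec_equiv]
  have h : (u ∘ ⇑e) ∘ ⇑e.symm = u := by funext i; simp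
  rw [h]
  exact dot_equiv e u (M *ᵥ u)

lemma quad_fromBlocks {α β : Type*} [Fintype α] [Fintype β]
    (A : Matrix α α ℝ) (B : Matrix α β ℝ) (C : Matrix β α ℝ) (D : Matrix β β ℝ)
    (x : α → ℝ) (y : β → ℝ) :
    (Sum.elim x y) ⬝ᵥ (fromBlocks A B C D) *ᵥ (Sum.elim x y) =
      x ⬝ᵥ A *ᵥ x + x ⬝ᵥ B *ᵥ y + (y ⬝ᵥ C *ᵥ x + y ⬝ᵥ D *ᵥ y) := by
  rw [fromBlocks_mulVec, sumElim_dotProduct_sumElim, dotProduct_add, dotProduct_add]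
  simp [Sum.elim_comp_inl, Sum.elim_comp_inr]

/-- PosDef transfers along a submatrix by an equivalence. -/
lemma posDef_submatrix_equiv {α : Type*} [Fintype α] {M : Matrix (Fin m) (Fin m) ℝ}
    (e : α ≃ Fin m) (h : (M.submatrix e e).PosDef) : M.PosDef := by
  refine PosDef.of_dotProduct_mulVec_pos ((isHermitian_submatrix_equiv e).1 h.1) fun x hx => ?_
  have hx' : x ∘ e ≠ 0 := by
    intro h0; apply hx; funext i
    have := congrFun h0 (e.symm i); simpa using this
  have := h.dotProduct_mulVec_pos hx'
  rwa [show star (x ∘ e) = x ∘ e from rfl, quad_equiv M e x] at this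

end helpers

lemma dot_self_nonneg {α : Type*} [Fintype α] (v : α → ℝ) : 0 ≤ v ⬝ᵥ v :=
  Finset.sum_nonneg fun i _ => mul_self_nonneg _


/-- Proposition 1: axiomatic characterization of partitioned heritability.  If `Γ` assigns to
every positive definite matrix `Sig` a symmetric matrix `Γ Sig` satisfying
(i) `0 ⪯ Γ Sig ⪯ Sig`, (ii) the quadratic forms of `Γ Sig` and `Sig` agree at `u` iff
`u_{Sᶜ} = 0`, and (iii) `Γ Sig` does not depend on the `Sᶜ × Sᶜ` entries of `Sig`, then
`Γ Sig` has blocks `Sig_{S,S}`, `Sig_{S,Sᶜ}`, `Sig_{Sᶜ,S}` and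
`Sig_{Sᶜ,S} Sig_{S,S}⁻¹ Sig_{S,Sᶜ}`; equivalently its quadratic form is
`uᵀ Sig u − u_{Sᶜ}ᵀ Sig_{Sᶜ|S} u_{Sᶜ}`. -/
theorem stmt_0 {m : ℕ} (hm : 2 ≤ m)
    (S : Finset (Fin m)) (hS : S.Nonempty) (hSproper : S ≠ Finset.univ)
    (σe2 : ℝ) (hσe2 : 0 < σe2)
    (Γ : Matrix (Fin m) (Fin m) ℝ → Matrix (Fin m) (Fin m) ℝ)
    (hsym : ∀ Sig : Matrix (Fin m) (Fin m) ℝ, Sig.PosDef → (Γ Sig).IsSymm)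
    (hi : ∀ Sig : Matrix (Fin m) (Fin m) ℝ, Sig.PosDef →
      (Γ Sig).PosSemidef ∧ (Sig - Γ Sig).PosSemidef)
    (hii : ∀ Sig : Matrix (Fin m) (Fin m) ℝ, Sig.PosDef → ∀ u : Fin m → ℝ,
      u ⬝ᵥ Γ Sig *ᵥ u = u ⬝ᵥ Sig *ᵥ u ↔ ∀ i, i ∉ S → u i = 0)
    (hiii : ∀ Sig Sig' : Matrix (Fin m) (Fin m) ℝ, Sig.PosDef → Sig'.PosDef →
      (∀ i j : Fin m, (i ∈ S ∨ j ∈ S) → Sig i j = Sig' i j) → Γ Sig = Γ Sig') :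
    ∀ Sig : Matrix (Fin m) (Fin m) ℝ, Sig.PosDef →
      blk (Γ Sig) S S = blk Sig S S ∧
      blk (Γ Sig) S Sᶜ = blk Sig S Sᶜ ∧
      blk (Γ Sig) Sᶜ S = blk Sig Sᶜ S ∧
      blk (Γ Sig) Sᶜ Sᶜ = blk Sig Sᶜ S * (blk Sig S S)⁻¹ * blk Sig S Sᶜ ∧
      ∀ u : Fin m → ℝ,
        u ⬝ᵥ Γ Sig *ᵥ u =
          u ⬝ᵥ Sig *ᵥ u - subvec u Sᶜ ⬝ᵥ schurCompl Sig S *ᵥ subvec u Sᶜ := by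
  intro Sig hSig
  classical
  set e := eS S with he
  have hSigsymm : ∀ a b, Sig a b = Sig b a := fun a b => by
    simpa using (hSig.1.apply a b).symm
  obtain ⟨hΓpsd, hTpsd⟩ := hi Sig hSig
  -- Step 1: the columns of `Sig - Γ Sig` indexed by `S` vanish.
  have hcol : ∀ j, j ∈ S → ∀ i, (Sig - Γ Sig) i j = 0 := by
    intro j hj i
    set δ : Fin m → ℝ := Pi.single j 1 with hδ
    have hu : ∀ k, k ∉ S → δ k = 0 := by
      intro k hk
      rw [hδ, Pi.single_apply, if_neg]; rintro rfl; exact hk hj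
    have hq := (hii Sig hSig δ).2 hu
    have hz : δ ⬝ᵥ (Sig - Γ Sig) *ᵥ δ = 0 := by
      rw [sub_mulVec, dotProduct_sub, hq]; ring
    have hker := (hTpsd.dotProduct_mulVec_zero_iff δ).1
      (by simpa using hz)
    have h2 := congrFun hker i
    simpa [hδ] using h2
  have hTsymm : ∀ a b, (Sig - Γ Sig) a b = (Sig - Γ Sig) b a := fun a b => by
    simpa using (hTpsd.1.apply a b).symm
  have hentry : ∀ i j, (i ∈ S ∨ j ∈ S) → Γ Sig i j = Sig i j := by
    intro i j hij
    have hz : (Sig - Γ Sig) i j = 0 := by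
      rcases hij with h | h
      · rw [hTsymm]; exact hcol i h j
      · exact hcol j h i
    have := sub_eq_zero.mp (by simpa [Matrix.sub_apply] using hz)
    exact this.symm
  have hb1 : blk (Γ Sig) S S = blk Sig S S := by
    ext i j; exact hentry i.1 j.1 (Or.inl i.2)
  have hb2 : blk (Γ Sig) S Sᶜ = blk Sig S Sᶜ := by
    ext i j; exact hentry i.1 j.1 (Or.inl i.2)
  have hb3 : blk (Γ Sig) Sᶜ S = blk Sig Sᶜ S := by
    ext i j; exact hentry i.1 j.1 (Or.inr j.2)
  -- abbreviations
  set A := blk Sig S S with hA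
  set B₀ := blk Sig S Sᶜ with hB₀
  set C := blk Sig Sᶜ Sᶜ with hC
  set D := blk (Γ Sig) Sᶜ Sᶜ with hD
  have hB : B₀ᴴ = blk Sig Sᶜ S := by
    ext i j
    simp only [conjTranspose_apply, hB₀, blk, of_apply, star_trivial]
    exact hSigsymm j.1 i.1
  have hSigBlocks : Sig.submatrix e e = fromBlocks A B₀ (blk Sig Sᶜ S) C :=
    submatrix_eS S Sig
  -- A is positive definite
  have hApd : A.PosDef := by
    refine PosDef.of_dotProduct_mulVec_pos ?_ ?_
    · ext i j
      simp only [conjTranspose_apply, hA, blk, of_apply, star_trivial]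
      exact hSigsymm j.1 i.1
    · intro x hx
      set y : Fin m → ℝ := Sum.elim x 0 ∘ e.symm with hy
      have hyc : y ∘ e = Sum.elim x 0 := by funext i; simp [hy]
      have hyne : y ≠ 0 := by
        intro h0
        apply hx; funext i
        have := congrFun h0 (e (Sum.inl i))
        simpa [hy] using this
      have hq := hSig.dotProduct_mulVec_pos hyne
      have hform : y ⬝ᵥ Sig *ᵥ y = x ⬝ᵥ A *ᵥ x := by
        rw [← quad_equiv Sig e y, hyc, hSigBlocks, quad_fromBlocks]
        simp
      rw [star_trivial, hform] at hq
      exact hq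
  haveI : Invertible A := hApd.isUnit.invertible
  -- Step 2: the Schur-type block inequality `D - B₀ᴴ A⁻¹ B₀ ⪰ 0`.
  have hΓBlocks : (Γ Sig).submatrix e e = fromBlocks A B₀ B₀ᴴ D := by
    rw [submatrix_eS, hb1, hb2, hb3, hB]
  have hsub : ((Γ Sig).submatrix e e).PosSemidef := hΓpsd.submatrix e
  rw [hΓBlocks] at hsub
  set N := B₀ᴴ * A⁻¹ * B₀ with hN
  have hDN : (D - N).PosSemidef := (PosDef.fromBlocks₁₁ B₀ D hApd).1 hsub
  -- Step 3: the reverse inequality, from axiom (iii).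
  have hkey : ∀ v : ↥Sᶜ → ℝ, ∀ ε : ℝ, 0 < ε →
      v ⬝ᵥ (D - N) *ᵥ v ≤ ε * (v ⬝ᵥ v) := by
    intro v ε hε
    set F : Matrix (↥S ⊕ ↥Sᶜ) (↥S ⊕ ↥Sᶜ) ℝ := fromBlocks A B₀ B₀ᴴ (N + ε • 1) with hF
    have hsimpl : N + ε • 1 - B₀ᴴ * A⁻¹ * B₀ = ε • (1 : Matrix ↥Sᶜ ↥Sᶜ ℝ) := by
      rw [hN]; abel
    have hsmul1 : (ε • (1 : Matrix ↥Sᶜ ↥Sᶜ ℝ)).IsHermitian := by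
      ext i j
      simp [conjTranspose_apply, Matrix.one_apply, eq_comm]
    have hFherm : F.IsHermitian := by
      rw [hF]
      refine (IsHermitian.fromBlocks₁₁ _ _ hApd.1).2 ?_
      rw [hsimpl]; exact hsmul1
    have hFpd : F.PosDef := by
      refine PosDef.of_dotProduct_mulVec_pos hFherm fun u hu => ?_
      set x := u ∘ Sum.inl with hx
      set yy := u ∘ Sum.inr with hyy
      have hdecomp : u = x ⊕ᵥ yy := (Sum.elim_comp_inl_inr u).symm
      have hschur := schur_complement_eq₁₁ (A := A) B₀ (N + ε • 1) x yy hApd.1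
      rw [hsimpl] at hschur
      simp only [star_trivial] at hschur
      have goal_eq : star u ⬝ᵥ F *ᵥ u = (x ⊕ᵥ yy) ᵥ* F ⬝ᵥ (x ⊕ᵥ yy) := by
        rw [star_trivial, dotProduct_mulVec, ← hdecomp]
      rw [goal_eq, hF, hschur]
      have h1 : 0 ≤ (x + (A⁻¹ * B₀) *ᵥ yy) ᵥ* A ⬝ᵥ (x + (A⁻¹ * B₀) *ᵥ yy) := by
        have := hApd.posSemidef.dotProduct_mulVec_nonneg (x + (A⁻¹ * B₀) *ᵥ yy)
        rwa [star_trivial, dotProduct_mulVec] at this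
      have h2 : yy ᵥ* (ε • (1:Matrix ↥Sᶜ ↥Sᶜ ℝ)) ⬝ᵥ yy = ε * (yy ⬝ᵥ yy) := by
        rw [← dotProduct_mulVec, smul_mulVec, one_mulVec, dotProduct_smul,
          smul_eq_mul]
      rw [h2]
      by_cases hy0 : yy = 0
      · have hxne : x ≠ 0 := by
          intro hx0; apply hu
          rw [hdecomp, hx0, hy0]
          funext i; cases i <;> rfl
        have hxA : x + (A⁻¹ * B₀) *ᵥ yy = x := by rw [hy0, mulVec_zero, add_zero]
        have hpos := hApd.dotProduct_mulVec_pos hxne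
        rw [star_trivial, dotProduct_mulVec] at hpos
        rw [hxA, hy0]
        simpa using hpos
      · have hyy2 : 0 < yy ⬝ᵥ yy :=
          lt_of_le_of_ne (dot_self_nonneg yy)
            (fun h => hy0 (dotProduct_self_eq_zero.mp h.symm))
        have := mul_pos hε hyy2
        linarith
    set Sig' := F.submatrix e.symm e.symm with hSig'
    have hSig'sub : Sig'.submatrix e e = F := by
      rw [hSig', submatrix_submatrix]
      simp [Equiv.symm_comp_self]
    have hSig'pd : Sig'.PosDef := posDef_submatrix_equiv e (by rw [hSig'sub]; exact hFpd)
    -- Sig and Sig' agree on entries with a row or column in S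
    have hagree : ∀ i j : Fin m, (i ∈ S ∨ j ∈ S) → Sig i j = Sig' i j := by
      intro i j hij
      have h1 : Sig i j = (Sig.submatrix e e) (e.symm i) (e.symm j) := by
        simp [submatrix_apply]
      have h2 : Sig' i j = F (e.symm i) (e.symm j) := rfl
      rw [h1, h2, hSigBlocks]
      have hinl : ∀ k : Fin m, k ∈ S → ∃ a : ↥S, e.symm k = Sum.inl a := by
        intro k hk
        rcases hek : e.symm k with a | b
        · exact ⟨a, rfl⟩
        · exfalso
          have : k = e (Sum.inr b) := by rw [← hek]; simp
          rw [eS_inr] at this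
          have hb := b.2
          rw [Finset.mem_compl] at hb
          exact hb (this ▸ hk)
      rcases hij with hij | hij
      · obtain ⟨a, ha⟩ := hinl i hij
        rw [ha]
        rcases e.symm j with b | b
        · rfl
        · rfl
      · obtain ⟨b, hb⟩ := hinl j hij
        rw [hb, hF, ← hB]
        rcases e.symm i with a | a
        · rfl
        · rfl
    have hΓeq : Γ Sig = Γ Sig' := hiii Sig Sig' hSig hSig'pd hagree
    have hpsd' := (hi Sig' hSig'pd).2
    rw [← hΓeq] at hpsd'
    have h3 : (fromBlocks 0 0 0 (N + ε • 1 - D) :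
        Matrix (↥S ⊕ ↥Sᶜ) (↥S ⊕ ↥Sᶜ) ℝ).PosSemidef := by
      have heq : (fromBlocks 0 0 0 (N + ε • 1 - D) :
          Matrix (↥S ⊕ ↥Sᶜ) (↥S ⊕ ↥Sᶜ) ℝ) = (Sig' - Γ Sig).submatrix e e := by
        have h7 : (Sig' - Γ Sig).submatrix (⇑e) (⇑e)
            = Sig'.submatrix (⇑e) (⇑e) - (Γ Sig).submatrix (⇑e) (⇑e) := by
          ext i j; simp [Matrix.sub_apply]
        rw [h7, hSig'sub, hΓBlocks, hF]
        ext i j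
        rcases i with i | i <;> rcases j with j | j <;>
          simp [Matrix.sub_apply]
      rw [heq]
      exact hpsd'.submatrix e
    have h4 := h3.dotProduct_mulVec_nonneg (Sum.elim 0 v)
    rw [star_trivial, quad_fromBlocks] at h4
    simp only [mulVec_zero, dotProduct_zero, zero_dotProduct, Matrix.zero_mulVec,
      zero_add, add_zero] at h4
    have h5 : v ⬝ᵥ (N + ε • 1 - D) *ᵥ v
        = ε * (v ⬝ᵥ v) - v ⬝ᵥ (D - N) *ᵥ v := by
      rw [sub_mulVec, add_mulVec, sub_mulVec, smul_mulVec, one_mulVec]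
      rw [dotProduct_sub, dotProduct_add, dotProduct_sub, dotProduct_smul, smul_eq_mul]
      ring
    rw [h5] at h4
    linarith
  -- combine the two inequalities to get `D = N`
  have hzero : ∀ v : ↥Sᶜ → ℝ, v ⬝ᵥ (D - N) *ᵥ v = 0 := by
    intro v
    have hge : 0 ≤ v ⬝ᵥ (D - N) *ᵥ v := by
      have := hDN.dotProduct_mulVec_nonneg v
      rwa [star_trivial] at this
    have hle : v ⬝ᵥ (D - N) *ᵥ v ≤ 0 := by
      by_contra hlt
      push_neg at hlt
      set c := v ⬝ᵥ (D - N) *ᵥ v with hc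
      set k := v ⬝ᵥ v with hk
      have hknn : 0 ≤ k := dot_self_nonneg v
      have hε : (0:ℝ) < c / (2 * (k + 1)) := by positivity
      have := hkey v _ hε
      rw [← hc, ← hk] at this
      have hkk : c / (2 * (k + 1)) * k ≤ c / 2 := by
        rw [div_mul_eq_mul_div, div_le_div_iff₀ (by positivity) (by norm_num)]
        nlinarith
      linarith
    linarith
  have hDeqN : D = N := by
    have hker : ∀ v : ↥Sᶜ → ℝ, (D - N) *ᵥ v = 0 := fun v =>
      (hDN.dotProduct_mulVec_zero_iff v).1 (by rw [star_trivial]; exact hzero v)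
    have : D - N = 0 := by
      ext i j
      have h6 := congrFun (hker (Pi.single j 1)) i
      simpa using h6
    have := sub_eq_zero.mp this
    exact this
  have hb4 : blk (Γ Sig) Sᶜ Sᶜ = blk Sig Sᶜ S * (blk Sig S S)⁻¹ * blk Sig S Sᶜ := by
    rw [← hD, hDeqN, hN, hB]
  refine ⟨hb1, hb2, hb3, hb4, ?_⟩
  -- the quadratic form identity
  intro u
  have hcomp : u ∘ e = Sum.elim (subvec u S) (subvec u Sᶜ) := comp_eS S u
  have e1 : u ⬝ᵥ Γ Sig *ᵥ u =
      subvec u S ⬝ᵥ A *ᵥ subvec u S + subvec u S ⬝ᵥ B₀ *ᵥ subvec u Sᶜ +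
        (subvec u Sᶜ ⬝ᵥ B₀ᴴ *ᵥ subvec u S + subvec u Sᶜ ⬝ᵥ D *ᵥ subvec u Sᶜ) := by
    rw [← quad_equiv (Γ Sig) e u, hcomp, hΓBlocks, quad_fromBlocks]
  have e2 : u ⬝ᵥ Sig *ᵥ u =
      subvec u S ⬝ᵥ A *ᵥ subvec u S + subvec u S ⬝ᵥ B₀ *ᵥ subvec u Sᶜ +
        (subvec u Sᶜ ⬝ᵥ B₀ᴴ *ᵥ subvec u S + subvec u Sᶜ ⬝ᵥ C *ᵥ subvec u Sᶜ) := by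
    rw [← quad_equiv Sig e u, hcomp, hSigBlocks, quad_fromBlocks, hB]
  have e3 : schurCompl Sig S = C - N := by
    rw [schurCompl, hN, hB, hA, hB₀, hC]
  rw [e1, e2, e3, hDeqN]
  rw [sub_mulVec, dotProduct_sub]
  ring
end

section
/- Let Σ_S be a p×p real symmetric positive definite matrix, B a p×q real matrix, M a q×q real symmetric positive semidefinite matrix, and β ∈ ℝ^q with βᵀMβ > 0 (in particular β ≠ 0). Set c = (βᵀMβ)/(4‖β‖²) and define the (p+q)×(p+q) block matrix Σ̃ with blocks [[Σ_S, B], [Bᵀ, BᵀΣ_S⁻¹B + (1/2)M + cI]], and the block matrix Γ with blocks [[Σ_S, B], [Bᵀ, BᵀΣ_S⁻¹B + M]]. Then: (a) Σ̃ is positive definite; and (b) for u = (0, β) ∈ ℝ^{p+q}, uᵀΓu − uᵀΣ̃u = (1/4)βᵀMβ > 0, so Σ̃ − Γ is not positive semidefinite. -/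
open Matrix

lemma quad_block {p q : ℕ} (A : Matrix (Fin p) (Fin p) ℝ) (B : Matrix (Fin p) (Fin q) ℝ)
    (D : Matrix (Fin q) (Fin q) ℝ) (β : Fin q → ℝ) :
    Sum.elim (0 : Fin p → ℝ) β ⬝ᵥ (Matrix.fromBlocks A B Bᵀ D) *ᵥ Sum.elim (0 : Fin p → ℝ) β
      = β ⬝ᵥ D *ᵥ β := by
  rw [show (Matrix.fromBlocks A B Bᵀ D) *ᵥ Sum.elim (0 : Fin p → ℝ) β
      = Sum.elim (A *ᵥ 0 + B *ᵥ β) (Bᵀ *ᵥ 0 + D *ᵥ β) from fromBlocks_mulVec A B Bᵀ D _,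
    sumElim_dotProduct_sumElim]
  simp

/-- The explicit construction in the contradiction step of Proposition 1: given a surplus
`M` with `βᵀMβ > 0` in the lower-right block, the matrix `Σ̃` below is positive definite,
yet the quadratic form of `Γ` exceeds that of `Σ̃` at `u = (0, β)` by `(1/4)βᵀMβ > 0`,
so `Σ̃ − Γ` is not positive semidefinite. -/
theorem stmt_3 {p q : ℕ} (SigS : Matrix (Fin p) (Fin p) ℝ)
    (hSigSsym : SigS.IsSymm) (hSigS : SigS.PosDef)
    (B : Matrix (Fin p) (Fin q) ℝ)
    (M : Matrix (Fin q) (Fin q) ℝ) (hMsym : M.IsSymm) (hM : M.PosSemidef)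
    (β : Fin q → ℝ) (hβM : 0 < β ⬝ᵥ M *ᵥ β)
    (c : ℝ) (hc : c = (β ⬝ᵥ M *ᵥ β) / (4 * (β ⬝ᵥ β)))
    (SigTilde Γ : Matrix (Fin p ⊕ Fin q) (Fin p ⊕ Fin q) ℝ)
    (hSigTilde : SigTilde =
      Matrix.fromBlocks SigS B Bᵀ (Bᵀ * SigS⁻¹ * B + (1 / 2 : ℝ) • M + c • (1 : Matrix (Fin q) (Fin q) ℝ)))
    (hΓ : Γ = Matrix.fromBlocks SigS B Bᵀ (Bᵀ * SigS⁻¹ * B + M))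
    (u : Fin p ⊕ Fin q → ℝ) (hu : u = Sum.elim (0 : Fin p → ℝ) β) :
    SigTilde.PosDef ∧
    u ⬝ᵥ Γ *ᵥ u - u ⬝ᵥ SigTilde *ᵥ u = (1 / 4 : ℝ) * (β ⬝ᵥ M *ᵥ β) ∧
    ¬ (SigTilde - Γ).PosSemidef := by
  haveI : Invertible SigS := hSigS.isUnit.invertible
  have hβ0 : β ≠ 0 := by
    rintro rfl; simp at hβM
  have hββ0 : 0 ≤ β ⬝ᵥ β := Finset.sum_nonneg fun i _ => mul_self_nonneg _
  have hββ : 0 < β ⬝ᵥ β :=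
    lt_of_le_of_ne hββ0 fun h => hβ0 (dotProduct_self_eq_zero.mp h.symm)
  have hcpos : 0 < c := by
    rw [hc]; positivity
  -- the Schur complement
  set S : Matrix (Fin q) (Fin q) ℝ := (1 / 2 : ℝ) • M + c • (1 : Matrix (Fin q) (Fin q) ℝ)
    with hS
  have hBH : Bᴴ = Bᵀ := by ext i j; simp
  have hSsymm : Sᵀ = S := by
    rw [hS, transpose_add, transpose_smul, transpose_smul, transpose_one, hMsym]
  have hSherm : S.IsHermitian := by
    rw [Matrix.IsHermitian, show Sᴴ = Sᵀ from by ext i j; simp [conjTranspose_apply], hSsymm]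
  have hSquad : ∀ y : Fin q → ℝ, y ⬝ᵥ S *ᵥ y = (1 / 2) * (y ⬝ᵥ M *ᵥ y) + c * (y ⬝ᵥ y) := by
    intro y
    simp [hS, add_mulVec, smul_mulVec, dotProduct_add, dotProduct_smul]
  have hSpos : S.PosDef := by
    refine PosDef.of_dotProduct_mulVec_pos hSherm fun y hy => ?_
    have h1 : 0 ≤ y ⬝ᵥ M *ᵥ y := by
      have := hM.dotProduct_mulVec_nonneg y; simpa using this
    have h2 : 0 < y ⬝ᵥ y :=
      lt_of_le_of_ne (Finset.sum_nonneg fun i _ => mul_self_nonneg _)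
        fun h => hy (dotProduct_self_eq_zero.mp h.symm)
    have : 0 < y ⬝ᵥ S *ᵥ y := by
      rw [hSquad y]; positivity
    simpa using this
  have hSigTildePD : SigTilde.PosDef := by
    rw [hSigTilde]
    refine PosDef.of_dotProduct_mulVec_pos ?_ ?_
    · rw [← hBH, Matrix.IsHermitian.fromBlocks₁₁ _ _ hSigS.1, hBH]
      rw [add_assoc, add_sub_cancel_left]
      exact hSherm
    · intro x hx
      have hxe : x = Sum.elim (x ∘ Sum.inl) (x ∘ Sum.inr) := by
        funext i; cases i <;> rfl
      have key := schur_complement_eq₁₁ (A := SigS) B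
        (Bᵀ * SigS⁻¹ * B + (1 / 2 : ℝ) • M + c • (1 : Matrix (Fin q) (Fin q) ℝ))
        (x ∘ Sum.inl) (x ∘ Sum.inr) hSigS.1
      rw [hBH] at key
      have hsimp : (Bᵀ * SigS⁻¹ * B + (1 / 2 : ℝ) • M + c • (1 : Matrix (Fin q) (Fin q) ℝ))
          - Bᵀ * SigS⁻¹ * B = S := by
        rw [add_assoc, add_sub_cancel_left]
      rw [hsimp] at key
      have hstar : ∀ (m : Type) (v : m → ℝ), star v = v := fun m v => rfl
      rw [hstar, hstar, hstar] at key
      rw [← dotProduct_mulVec, ← dotProduct_mulVec, ← dotProduct_mulVec] at key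
      rw [show (star x : (Fin p ⊕ Fin q) → ℝ) = x from rfl, hxe, key]
      rcases eq_or_ne (x ∘ Sum.inr) 0 with h | h
      · have hx1 : x ∘ Sum.inl ≠ 0 := by
          intro h1
          apply hx
          rw [hxe, h, h1]; funext i; cases i <;> rfl
        have h1 : 0 < (x ∘ Sum.inl + (SigS⁻¹ * B) *ᵥ (x ∘ Sum.inr)) ⬝ᵥ SigS *ᵥ
            (x ∘ Sum.inl + (SigS⁻¹ * B) *ᵥ (x ∘ Sum.inr)) := by
          have := hSigS.dotProduct_mulVec_pos (x := x ∘ Sum.inl + (SigS⁻¹ * B) *ᵥ (x ∘ Sum.inr))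
            (by simpa [h] using hx1)
          simpa [h] using this
        have h2 : 0 ≤ (x ∘ Sum.inr) ⬝ᵥ S *ᵥ (x ∘ Sum.inr) := by
          rw [h]; simp
        linarith
      · have h1 : 0 ≤ (x ∘ Sum.inl + (SigS⁻¹ * B) *ᵥ (x ∘ Sum.inr)) ⬝ᵥ SigS *ᵥ
            (x ∘ Sum.inl + (SigS⁻¹ * B) *ᵥ (x ∘ Sum.inr)) := by
          have := hSigS.posSemidef.dotProduct_mulVec_nonneg (x ∘ Sum.inl + (SigS⁻¹ * B) *ᵥ (x ∘ Sum.inr))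
          simpa using this
        have h2 : 0 < (x ∘ Sum.inr) ⬝ᵥ S *ᵥ (x ∘ Sum.inr) := by
          have := hSpos.dotProduct_mulVec_pos h
          simpa using this
        linarith
  have hΓquad : u ⬝ᵥ Γ *ᵥ u = β ⬝ᵥ (Bᵀ * SigS⁻¹ * B) *ᵥ β + β ⬝ᵥ M *ᵥ β := by
    rw [hΓ, hu, quad_block]
    simp [add_mulVec, dotProduct_add]
  have hSquad2 : u ⬝ᵥ SigTilde *ᵥ u = β ⬝ᵥ (Bᵀ * SigS⁻¹ * B) *ᵥ β
      + ((1 / 2) * (β ⬝ᵥ M *ᵥ β) + c * (β ⬝ᵥ β)) := by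
    rw [hSigTilde, hu, quad_block, add_assoc, add_mulVec, dotProduct_add, ← hS, hSquad]
  have hcb : c * (β ⬝ᵥ β) = (β ⬝ᵥ M *ᵥ β) / 4 := by
    rw [hc]
    field_simp
  have hdiff : u ⬝ᵥ Γ *ᵥ u - u ⬝ᵥ SigTilde *ᵥ u = (1 / 4 : ℝ) * (β ⬝ᵥ M *ᵥ β) := by
    rw [hΓquad, hSquad2, hcb]; ring
  refine ⟨hSigTildePD, hdiff, fun hpsd => ?_⟩
  have := hpsd.dotProduct_mulVec_nonneg u
  rw [sub_mulVec] at this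
  have h2 : (0 : ℝ) ≤ u ⬝ᵥ SigTilde *ᵥ u - u ⬝ᵥ Γ *ᵥ u := by
    simpa [dotProduct_sub] using this
  linarith
end

section
/- Let Σ be an m×m real symmetric positive definite matrix, S a nonempty subset of {1,…,m}, and Π the m×|S| matrix whose columns are the standard basis vectors of ℝᵐ indexed by S (the coordinate inclusion). Then ΠᵀΣΠ = Σ_{S,S} is invertible, and for every u ∈ ℝᵐ, uᵀ Σ Π (ΠᵀΣΠ)⁻¹ Πᵀ Σ u = uᵀΣu − u_{Sᶜ}ᵀ Σ_{Sᶜ|S} u_{Sᶜ}. -/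
open Matrix

/-- The `m × |S|` coordinate-inclusion matrix whose columns are the standard basis
vectors indexed by `S`. -/
def coordIncl {m : ℕ} (S : Finset (Fin m)) : Matrix (Fin m) ↥S ℝ :=
  Matrix.of fun i j => if i = j.val then 1 else 0

lemma sum_split {m : ℕ} (S : Finset (Fin m)) (f : Fin m → ℝ) :
    ∑ k, f k = (∑ i : ↥S, f i.val) + ∑ i : ↥Sᶜ, f i.val := by
  rw [Finset.sum_coe_sort S f, Finset.sum_coe_sort Sᶜ f, Finset.sum_add_sum_compl S f]

lemma dot_split {m : ℕ} (S : Finset (Fin m)) (u v : Fin m → ℝ) :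
    u ⬝ᵥ v = subvec u S ⬝ᵥ subvec v S + subvec u Sᶜ ⬝ᵥ subvec v Sᶜ := by
  simpa [dotProduct, subvec] using sum_split S (fun k => u k * v k)

lemma subvec_mulVec {m : ℕ} (A : Matrix (Fin m) (Fin m) ℝ) (S T : Finset (Fin m))
    (u : Fin m → ℝ) :
    subvec (A *ᵥ u) T = blk A T S *ᵥ subvec u S + blk A T Sᶜ *ᵥ subvec u Sᶜ := by
  funext i
  simpa [subvec, mulVec, dotProduct, blk, Pi.add_apply] using
    sum_split S (fun k => A i.val k * u k)

lemma coordIncl_transpose_mulVec {m : ℕ} (S : Finset (Fin m)) (x : Fin m → ℝ) :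
    (coordIncl S)ᵀ *ᵥ x = subvec x S := by
  funext i
  simp [coordIncl, mulVec, dotProduct, subvec, transpose_apply]

lemma transpose_mul_coordIncl {m : ℕ} (S : Finset (Fin m)) (Sig : Matrix (Fin m) (Fin m) ℝ) :
    (coordIncl S)ᵀ * Sig * coordIncl S = blk Sig S S := by
  ext i j
  simp [coordIncl, blk, Matrix.mul_apply, Finset.sum_ite_eq, transpose_apply,
    mul_ite, ite_mul, Finset.sum_ite_eq']

lemma blk_posDef {m : ℕ} {Sig : Matrix (Fin m) (Fin m) ℝ} (hSig : Sig.PosDef)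
    (S : Finset (Fin m)) : (blk Sig S S).PosDef := by
  classical
  rw [posDef_iff_dotProduct_mulVec]
  constructor
  · ext i j
    exact congrFun (congrFun hSig.isHermitian i.val) j.val
  · intro x hx
    set y : Fin m → ℝ := fun k => if h : k ∈ S then x ⟨k, h⟩ else 0 with hy
    have hy0 : y ≠ 0 := by
      intro h
      apply hx
      funext i
      have := congrFun h i.val
      simpa [hy, dif_pos i.prop] using this
    have key : x ⬝ᵥ (blk Sig S S) *ᵥ x = y ⬝ᵥ Sig *ᵥ y := by
      have h1 : subvec y S = x := by funext i; simp [hy, subvec, i.prop]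
      have h2 : subvec y Sᶜ = 0 := by
        funext i
        have : i.val ∉ S := Finset.mem_compl.mp i.prop
        simp [hy, subvec, this]
      rw [dot_split S, subvec_mulVec Sig S S, subvec_mulVec Sig S Sᶜ, h1, h2]
      simp
    simpa only [star_trivial, key] using hSig.dotProduct_mulVec_pos hy0

/-- Identity (cher4) of Lemma 1: for the coordinate inclusion `Π = Π_S`, the matrix
`ΠᵀΣΠ = Σ_{S,S}` is invertible, and the `C`-heritability numerator
`uᵀΣΠ(ΠᵀΣΠ)⁻¹ΠᵀΣu` equals `uᵀΣu − u_{Sᶜ}ᵀ Σ_{Sᶜ|S} u_{Sᶜ}`. -/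
theorem stmt_5 {m : ℕ} (Sig : Matrix (Fin m) (Fin m) ℝ)
    (hSigsym : Sig.IsSymm) (hSig : Sig.PosDef)
    (S : Finset (Fin m)) (hS : S.Nonempty) :
    (coordIncl S)ᵀ * Sig * coordIncl S = blk Sig S S ∧
    IsUnit ((coordIncl S)ᵀ * Sig * coordIncl S).det ∧
    ∀ u : Fin m → ℝ,
      u ⬝ᵥ (Sig * coordIncl S * ((coordIncl S)ᵀ * Sig * coordIncl S)⁻¹ *
          (coordIncl S)ᵀ * Sig) *ᵥ u =
        u ⬝ᵥ Sig *ᵥ u - subvec u Sᶜ ⬝ᵥ schurCompl Sig S *ᵥ subvec u Sᶜ := by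
  classical
  have hblk := transpose_mul_coordIncl S Sig
  set A := blk Sig S S with hA
  have hApd : A.PosDef := blk_posDef hSig S
  have hAdet : IsUnit A.det := by
    rw [isUnit_iff_ne_zero]
    exact ne_of_gt hApd.det_pos
  have hAsym : Aᵀ = A := by
    ext i j
    exact congrFun (congrFun hSigsym i.val) j.val
  have hAinv : A⁻¹ * A = 1 := nonsing_inv_mul A hAdet
  have hAinv' : A * A⁻¹ = 1 := mul_nonsing_inv A hAdet
  refine ⟨hblk, by rw [hblk]; exact hAdet, fun u => ?_⟩
  set a := subvec u S with ha
  set b := subvec u Sᶜ with hb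
  set C := blk Sig S Sᶜ with hC
  set Ct := blk Sig Sᶜ S with hCt
  set D := blk Sig Sᶜ Sᶜ with hD
  have hCtT : Cᵀ = Ct := by
    ext i j
    exact congrFun (congrFun hSigsym i.val) j.val
  have hSigT : Sigᵀ = Sig := hSigsym
  set w : Fin m → ℝ := Sig *ᵥ u with hw
  have hws : subvec w S = A *ᵥ a + C *ᵥ b := subvec_mulVec Sig S S u
  have hwc : subvec w Sᶜ = Ct *ᵥ a + D *ᵥ b := subvec_mulVec Sig S Sᶜ u
  have hLHS : u ⬝ᵥ (Sig * coordIncl S * ((coordIncl S)ᵀ * Sig * coordIncl S)⁻¹ *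
      (coordIncl S)ᵀ * Sig) *ᵥ u = subvec w S ⬝ᵥ A⁻¹ *ᵥ subvec w S := by
    rw [hblk]
    rw [show Sig * coordIncl S * A⁻¹ * (coordIncl S)ᵀ * Sig
        = Sig * (coordIncl S * (A⁻¹ * ((coordIncl S)ᵀ * Sig))) from by
      simp only [Matrix.mul_assoc]]
    rw [← mulVec_mulVec, dotProduct_mulVec, ← mulVec_transpose, hSigT, ← hw]
    rw [← mulVec_mulVec, dotProduct_mulVec, ← mulVec_transpose, coordIncl_transpose_mulVec]
    rw [← mulVec_mulVec, ← mulVec_mulVec, ← hw, coordIncl_transpose_mulVec]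
  have hRHS1 : u ⬝ᵥ w = a ⬝ᵥ subvec w S + b ⬝ᵥ subvec w Sᶜ := dot_split S u w
  have key : ∀ z : ↥S → ℝ, (A *ᵥ z) ⬝ᵥ A⁻¹ *ᵥ subvec w S = z ⬝ᵥ subvec w S := by
    intro z
    rw [dotProduct_mulVec, ← mulVec_transpose, Matrix.transpose_nonsing_inv, hAsym,
      mulVec_mulVec, hAinv, one_mulVec]
  have expand : subvec w S ⬝ᵥ A⁻¹ *ᵥ subvec w S
      = a ⬝ᵥ subvec w S + (C *ᵥ b) ⬝ᵥ A⁻¹ *ᵥ subvec w S := by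
    nth_rewrite 1 [hws]
    rw [add_dotProduct, key a]
  have h1 : (C *ᵥ b) ⬝ᵥ a = b ⬝ᵥ Ct *ᵥ a := by
    rw [← hCtT, mulVec_transpose, dotProduct_comm b, ← dotProduct_mulVec,
      dotProduct_comm (C *ᵥ b) a]
  have hM : (A⁻¹ * C)ᵀ * C = Ct * A⁻¹ * C := by
    rw [Matrix.transpose_mul, hCtT, Matrix.transpose_nonsing_inv, hAsym]
  have h2 : (C *ᵥ b) ⬝ᵥ A⁻¹ *ᵥ (C *ᵥ b) = b ⬝ᵥ (Ct * A⁻¹ * C) *ᵥ b := by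
    rw [mulVec_mulVec, dotProduct_mulVec (C *ᵥ b) (A⁻¹ * C) b, ← mulVec_transpose,
      mulVec_mulVec, dotProduct_comm, hM]
  have hCb : (C *ᵥ b) ⬝ᵥ A⁻¹ *ᵥ subvec w S
      = b ⬝ᵥ Ct *ᵥ a + b ⬝ᵥ (Ct * A⁻¹ * C) *ᵥ b := by
    rw [hws, Matrix.mulVec_add, dotProduct_add, mulVec_mulVec, hAinv, one_mulVec, h1, h2]
  have hschur : b ⬝ᵥ schurCompl Sig S *ᵥ b
      = b ⬝ᵥ D *ᵥ b - b ⬝ᵥ (Ct * A⁻¹ * C) *ᵥ b := by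
    rw [schurCompl, ← hA, ← hC, ← hCt, ← hD, Matrix.sub_mulVec, dotProduct_sub]
  have hwc' : b ⬝ᵥ subvec w Sᶜ = b ⬝ᵥ Ct *ᵥ a + b ⬝ᵥ D *ᵥ b := by
    rw [hwc, dotProduct_add]
  rw [hLHS, expand, hCb, hRHS1, hschur, hwc']
  ring
end
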